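/- Character property of rank-1 polynomial lattice rules: let b be prime, m ∈ ℕ, p ∈ 𝔽_b[x] with deg(p) = m, and q ∈ 𝔽_b[x] with deg(q) < m. For h ∈ {0,…,b^m−1}, identify h with the polynomial h(x) ∈ 𝔽_b[x] via base-b digits, and define x_h = ν_m(h(x)q(x)/p(x)) ∈ [0,1), where ν_m truncates the formal Laurent series Σ_{i≥w} a_i x^{−i} to Σ_{i=1}^m a_i b^{−i}. Then for any k ∈ {0,…,b^m−1}, (1/b^m)Σ_{h=0}^{b^m−1} wal_k(x_h) equals 1 if k(x)·q(x) ≡ 0 (mod p(x)), and 0 otherwise. -/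

import Mathlib

open Complex Finset Polynomial
open scoped Classical

/-- The `i`-th base-`b` digit of `h`. -/
def bdigit (b h i : ℕ) : ℕ := (Nat.digits b h).getD i 0

section digits

variable {b : ℕ}

lemma bdigit_lt (hb : 2 ≤ b) (h i : ℕ) : bdigit b h i < b := by
  unfold bdigit
  rcases lt_or_ge i (Nat.digits b h).length with hi | hi
  · rw [List.getD_eq_getElem _ _ hi]
    exact Nat.digits_lt_base hb (List.getElem_mem _)
  · rw [List.getD_eq_default _ _ hi]; omega

lemma bdigit_zero_left (i : ℕ) : bdigit b 0 i = 0 := by simp [bdigit]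

lemma bdigit_zero (hb : 2 ≤ b) (h : ℕ) : bdigit b h 0 = h % b := by
  rcases Nat.eq_zero_or_pos h with rfl | hp
  · simp [bdigit]
  · unfold bdigit
    rw [Nat.digits_def' (by omega : 1 < b) hp]
    rfl

lemma bdigit_succ (hb : 2 ≤ b) (h i : ℕ) : bdigit b h (i + 1) = bdigit b (h / b) i := by
  rcases Nat.eq_zero_or_pos h with rfl | hp
  · simp [bdigit]
  · unfold bdigit
    rw [Nat.digits_def' (by omega : 1 < b) hp]
    rfl

lemma sum_bdigit (hb : 2 ≤ b) : ∀ m h, h < b ^ m → ∑ i ∈ Finset.range m, bdigit b h i * b ^ i = h := by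
  intro m
  induction m with
  | zero =>
    intro h hh
    have : h = 0 := by simpa using hh
    simp [this]
  | succ m ih =>
    intro h hh
    rw [Finset.sum_range_succ']
    have e1 : ∀ i, bdigit b h (i + 1) * b ^ (i + 1) = (bdigit b (h / b) i * b ^ i) * b := by
      intro i; rw [bdigit_succ hb]; ring
    rw [Finset.sum_congr rfl fun i _ => e1 i, ← Finset.sum_mul,
      ih (h / b) (by
        have hb0 : 0 < b := by omega
        rw [Nat.div_lt_iff_lt_mul hb0]
        calc h < b ^ (m + 1) := hh
        _ = b ^ m * b := by ring), bdigit_zero hb]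
    rw [pow_zero, mul_one]
    exact Nat.div_add_mod' h b

lemma bdigit_sum (hb : 2 ≤ b) : ∀ (m : ℕ) (c : ℕ → ℕ), (∀ i, c i < b) → ∀ j, j < m →
    bdigit b (∑ i ∈ Finset.range m, c i * b ^ i) j = c j := by
  intro m
  induction m with
  | zero => intro c hc j hj; omega
  | succ m ih =>
    intro c hc j hj
    have hb0 : 0 < b := by omega
    have hsum : ∑ i ∈ Finset.range (m + 1), c i * b ^ i
        = b * (∑ i ∈ Finset.range m, c (i + 1) * b ^ i) + c 0 := by
      rw [Finset.sum_range_succ', Finset.mul_sum]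
      congr 1
      · exact Finset.sum_congr rfl fun i _ => by ring
      · simp
    cases j with
    | zero =>
      rw [bdigit_zero hb, hsum, Nat.mul_add_mod, Nat.mod_eq_of_lt (hc 0)]
    | succ j =>
      rw [bdigit_succ hb, hsum]
      have : (b * (∑ i ∈ Finset.range m, c (i + 1) * b ^ i) + c 0) / b
          = ∑ i ∈ Finset.range m, c (i + 1) * b ^ i := by
        rw [Nat.mul_add_div hb0, Nat.div_eq_of_lt (hc 0), add_zero]
      rw [this]
      exact ih (fun i => c (i + 1)) (fun i => hc (i + 1)) j (by omega)

lemma digits_len_le (hb : 2 ≤ b) : ∀ m h, h < b ^ m → (Nat.digits b h).length ≤ m := by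
  intro m
  induction m with
  | zero =>
    intro h hh
    have : h = 0 := by simpa using hh
    simp [this]
  | succ m ih =>
    intro h hh
    rcases Nat.eq_zero_or_pos h with rfl | hp
    · simp
    · rw [Nat.digits_def' (by omega : 1 < b) hp]
      simp only [List.length_cons, Nat.add_le_add_iff_right]
      exact ih _ (by
        have hb0 : 0 < b := by omega
        rw [Nat.div_lt_iff_lt_mul hb0]
        calc h < b ^ (m + 1) := hh
        _ = b ^ m * b := by ring)

lemma bdigit_eq_zero_of_le (hb : 2 ≤ b) {m h : ℕ} (hh : h < b ^ m) {i : ℕ} (hi : m ≤ i) :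
    bdigit b h i = 0 := by
  unfold bdigit
  exact List.getD_eq_default _ _ ((digits_len_le hb m h hh).trans hi)

end digits

/-- The polynomial over `𝔽_b` associated with the base-`b` digits of `h`:
`h = η₀ + η₁b + ⋯ ↦ η₀ + η₁x + ⋯`. -/
noncomputable def natToPoly (b h : ℕ) : Polynomial (ZMod b) :=
  ∑ i ∈ Finset.range (Nat.digits b h).length,
    Polynomial.C ((bdigit b h i : ZMod b)) * Polynomial.X ^ i

/-- The coefficient `a_i` of `x^{-i}` (for `i ≥ 1`) in the formal Laurent expansion of
`h(x)q(x)/p(x)` in powers of `x^{-1}`, computed via the power-series identity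
`Σ_{i≥1} a_i y^i = y·R*(y)/p*(y)` where `R = h·q mod p` and `R*, p*` are the
reflected polynomials. -/
noncomputable def laurentCoeff (b : ℕ) [Fact (Nat.Prime b)] (m : ℕ)
    (p q : Polynomial (ZMod b)) (h i : ℕ) : ZMod b :=
  PowerSeries.coeff (R := ZMod b) i
    (PowerSeries.X *
      (↑(Polynomial.reflect (m - 1) ((natToPoly b h * q) % p)) : PowerSeries (ZMod b)) *
      ((↑(Polynomial.reflect m p) : PowerSeries (ZMod b)))⁻¹)

/-- The polynomial with coefficient vector `v`. -/
noncomputable def polyOf {b : ℕ} (m : ℕ) (v : Fin m → ZMod b) : Polynomial (ZMod b) :=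
  ∑ i : Fin m, Polynomial.C (v i) * Polynomial.X ^ (i : ℕ)

lemma coeff_polyOf {b m : ℕ} (v : Fin m → ZMod b) (j : ℕ) :
    (polyOf m v).coeff j = if h : j < m then v ⟨j, h⟩ else 0 := by
  classical
  unfold polyOf
  rw [Polynomial.finset_sum_coeff]
  simp only [Polynomial.coeff_C_mul, Polynomial.coeff_X_pow]
  split_ifs with h
  · rw [Finset.sum_eq_single (⟨j, h⟩ : Fin m)]
    · simp
    · intro i _ hij
      have : j ≠ (i : ℕ) := fun hc => hij (by ext; simp [hc.symm])
      simp [this]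
    · intro hmem; exact absurd (Finset.mem_univ _) hmem
  · apply Finset.sum_eq_zero
    intro i _
    have : j ≠ (i : ℕ) := fun hc => h (hc ▸ i.isLt)
    simp [this]

lemma coeff_natToPoly (b h i : ℕ) : (natToPoly b h).coeff i = (bdigit b h i : ZMod b) := by
  classical
  unfold natToPoly
  rw [Polynomial.finset_sum_coeff]
  simp only [Polynomial.coeff_C_mul, Polynomial.coeff_X_pow]
  rcases lt_or_ge i (Nat.digits b h).length with hi | hi
  · rw [Finset.sum_eq_single i]
    · simp
    · intro j _ hj; simp [Ne.symm hj]
    · intro hmem; exact absurd (Finset.mem_range.mpr hi) hmem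
  · rw [Finset.sum_eq_zero]
    · have : bdigit b h i = 0 := List.getD_eq_default _ _ hi
      simp [this]
    · intro j hj
      have : i ≠ j := by rw [Finset.mem_range] at hj; omega
      simp [this]

lemma natToPoly_eq_polyOf {b m h : ℕ} (hb : 2 ≤ b) (hh : h < b ^ m) :
    natToPoly b h = polyOf m (fun i : Fin m => (bdigit b h (i : ℕ) : ZMod b)) := by
  apply Polynomial.ext
  intro j
  rw [coeff_natToPoly, coeff_polyOf]
  split_ifs with hj
  · rfl
  · rw [bdigit_eq_zero_of_le hb hh (by omega)]
    simp

lemma polyOf_add {b m : ℕ} (u v : Fin m → ZMod b) :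
    polyOf m (u + v) = polyOf m u + polyOf m v := by
  unfold polyOf
  rw [← Finset.sum_add_distrib]
  apply Finset.sum_congr rfl
  intro i _
  simp [Polynomial.C_add, add_mul]

lemma sum_digits_lt {b : ℕ} (hb : 2 ≤ b) : ∀ (m : ℕ) (c : ℕ → ℕ), (∀ i, c i < b) →
    ∑ i ∈ Finset.range m, c i * b ^ i < b ^ m := by
  intro m
  induction m with
  | zero => intro c hc; simp
  | succ m ih =>
    intro c hc
    rw [Finset.sum_range_succ]
    have h1 := ih c hc
    have h2 : c m * b ^ m ≤ (b - 1) * b ^ m :=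
      Nat.mul_le_mul_right _ (by have := hc m; omega)
    have hb1 : b - 1 + 1 = b := by omega
    have h3 : b ^ m + (b - 1) * b ^ m = b ^ (m + 1) := by
      obtain ⟨t, rfl⟩ : ∃ t, b = t + 1 := ⟨b - 1, by omega⟩
      simp only [Nat.add_sub_cancel]
      ring
    omega

lemma sum_digits_reindex {b : ℕ} [NeZero b] (hb : 2 ≤ b) (m : ℕ) (G : (Fin m → ZMod b) → ℂ) :
    ∑ h ∈ Finset.range (b ^ m), G (fun i : Fin m => (bdigit b h (i : ℕ) : ZMod b))
      = ∑ v : Fin m → ZMod b, G v := by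
  classical
  apply Finset.sum_nbij' (i := fun h => fun i : Fin m => (bdigit b h (i : ℕ) : ZMod b))
    (j := fun v => ∑ i ∈ Finset.range m, (if hi : i < m then (v ⟨i, hi⟩).val else 0) * b ^ i)
  · intro a _; exact Finset.mem_univ _
  · intro v _
    rw [Finset.mem_range]
    apply sum_digits_lt hb
    intro i
    split_ifs with hi
    · exact ZMod.val_lt _
    · omega
  · intro h hmem
    rw [Finset.mem_range] at hmem
    have : ∀ i ∈ Finset.range m,
        (if hi : i < m then ((bdigit b h i : ZMod b)).val else 0) * b ^ i
          = bdigit b h i * b ^ i := by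
      intro i hi
      rw [Finset.mem_range] at hi
      rw [dif_pos hi, ZMod.val_cast_of_lt (bdigit_lt hb h i)]
    rw [Finset.sum_congr rfl this, sum_bdigit hb m h hmem]
  · intro v _
    funext ii
    have hc : ∀ i, (if hi : i < m then (v ⟨i, hi⟩).val else 0) < b := by
      intro i
      split_ifs with hi
      · exact ZMod.val_lt _
      · omega
    rw [bdigit_sum hb m _ hc (ii : ℕ) ii.isLt, dif_pos ii.isLt]
    simp [ZMod.natCast_rightInverse (v ii)]
  · intro a _; rfl

section key

variable {b : ℕ} [hb : Fact (Nat.Prime b)]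

lemma natDeg_le_of_deg_lt {f : Polynomial (ZMod b)} {n : ℕ}
    (h : f.degree < ((n + 1 : ℕ) : WithBot ℕ)) : f.natDegree ≤ n := by
  rcases eq_or_ne f 0 with rfl | h0
  · simp
  · rw [Polynomial.degree_eq_natDegree h0] at h
    exact_mod_cast Nat.lt_succ_iff.mp (by exact_mod_cast h)

lemma modByMonic_mul_mod (K x pm : Polynomial (ZMod b)) (hmonic : pm.Monic) :
    (K * (x %ₘ pm)) %ₘ pm = (K * x) %ₘ pm := by
  conv_rhs => rw [← Polynomial.modByMonic_add_div x pm]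
  rw [mul_add, Polynomial.add_modByMonic]
  have h0 : (K * (pm * (x /ₘ pm))) %ₘ pm = 0 :=
    (Polynomial.modByMonic_eq_zero_iff_dvd hmonic).mpr ⟨K * (x /ₘ pm), by ring⟩
  rw [h0, add_zero]

lemma key_identity (n : ℕ) (p K R : Polynomial (ZMod b))
    (hp : p.degree = ((n + 1 : ℕ) : WithBot ℕ))
    (hK : K.natDegree ≤ n) (hR : R.natDegree ≤ n) :
    ∑ i ∈ Finset.range (n + 1), K.coeff i *
      PowerSeries.coeff (R := ZMod b) i
        ((↑(Polynomial.reflect n R) : PowerSeries (ZMod b)) *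
         ((↑(Polynomial.reflect (n + 1) p) : PowerSeries (ZMod b)))⁻¹)
      = (p.leadingCoeff)⁻¹ *
        ((K * R) %ₘ (p * Polynomial.C p.leadingCoeff⁻¹)).coeff n := by
  classical
  have hp0 : p ≠ 0 := by
    intro h
    rw [h, Polynomial.degree_zero] at hp
    exact WithBot.bot_ne_coe (by exact_mod_cast hp)
  have hlc0 : p.leadingCoeff ≠ 0 := Polynomial.leadingCoeff_ne_zero.mpr hp0
  set lc := p.leadingCoeff with hlc
  set pm := p * Polynomial.C lc⁻¹ with hpm
  have hmonic : pm.Monic := Polynomial.monic_mul_leadingCoeff_inv hp0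
  have hpmdeg : pm.degree = ((n + 1 : ℕ) : WithBot ℕ) := by
    rw [hpm, Polynomial.degree_mul_leadingCoeff_inv _ hp0, hp]
  have hpnat : p.natDegree = n + 1 := Polynomial.natDegree_eq_of_degree_eq_some hp
  set q' := K * R with hq'
  set B := q' %ₘ pm with hB
  set A := q' /ₘ pm with hA
  have hBA : B + pm * A = q' := Polynomial.modByMonic_add_div q' pm
  have hBdeg : B.degree < ((n + 1 : ℕ) : WithBot ℕ) :=
    hpmdeg ▸ Polynomial.degree_modByMonic_lt q' hmonic
  have hBnat : B.natDegree ≤ n := natDeg_le_of_deg_lt hBdeg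
  set A₀ := Polynomial.C lc⁻¹ * A with hA₀
  have hq'' : q' = B + p * A₀ := by
    rw [← hBA, hpm, hA₀]; ring
  have hq'nat : q'.natDegree ≤ n + n :=
    Polynomial.natDegree_mul_le.trans (add_le_add hK hR)
  have hAcase : A₀ = 0 ∨ (1 ≤ n ∧ A₀.natDegree ≤ n - 1) := by
    rcases eq_or_ne A₀ 0 with h0 | h0
    · left; exact h0
    · right
      have hpA : p * A₀ = q' - B := by rw [hq'']; ring
      have hdeg : (p * A₀).natDegree ≤ n + n := by
        rw [hpA]
        exact (Polynomial.natDegree_sub_le _ _).trans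
          (max_le hq'nat (hBnat.trans (by omega)))
      rw [Polynomial.natDegree_mul hp0 h0, hpnat] at hdeg
      omega
  -- polynomial identity
  have hrefl1 : Polynomial.reflect n (1 : Polynomial (ZMod b)) = Polynomial.X ^ n := by
    rw [← pow_zero (Polynomial.X : Polynomial (ZMod b)), Polynomial.reflect_monomial,
      Polynomial.revAt_zero]
  have hreflB : Polynomial.reflect (n + n) B = Polynomial.reflect n B * Polynomial.X ^ n := by
    have h1 := Polynomial.reflect_mul B 1 hBnat (by simp : (1 : Polynomial (ZMod b)).natDegree ≤ n)
    rw [mul_one, hrefl1] at h1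
    exact h1
  have hreflpA : Polynomial.reflect (n + n) (p * A₀)
      = Polynomial.reflect (n - 1) A₀ * Polynomial.reflect (n + 1) p := by
    rcases hAcase with h0 | ⟨hn1, hAdeg⟩
    · simp [h0]
    · have h2 : n - 1 + (n + 1) = n + n := by omega
      rw [mul_comm p A₀, ← h2]
      exact Polynomial.reflect_mul _ _ hAdeg (le_of_eq hpnat)
  have hreflKR : Polynomial.reflect n K * Polynomial.reflect n R
      = Polynomial.reflect n B * Polynomial.X ^ n
        + Polynomial.reflect (n - 1) A₀ * Polynomial.reflect (n + 1) p := by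
    rw [← Polynomial.reflect_mul K R hK hR, ← hq', hq'', Polynomial.reflect_add,
      hreflB, hreflpA]
  -- power series
  set u := (↑(Polynomial.reflect (n + 1) p) : PowerSeries (ZMod b)) with hu
  have hcc : PowerSeries.constantCoeff (R := ZMod b) u = lc := by
    rw [hu, ← PowerSeries.coeff_zero_eq_constantCoeff_apply, Polynomial.coeff_coe,
      Polynomial.coeff_reflect, Polynomial.revAt_zero, hlc, Polynomial.leadingCoeff, hpnat]
  have hu0 : PowerSeries.constantCoeff (R := ZMod b) u ≠ 0 := by rw [hcc]; exact hlc0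
  have huinv : u * u⁻¹ = 1 := by
    rw [mul_comm]; exact PowerSeries.inv_mul_cancel u hu0
  have hcoe : (↑(Polynomial.reflect n K) : PowerSeries (ZMod b))
        * (↑(Polynomial.reflect n R) : PowerSeries (ZMod b))
      = (↑(Polynomial.reflect n B) : PowerSeries (ZMod b)) * PowerSeries.X ^ n
        + (↑(Polynomial.reflect (n - 1) A₀) : PowerSeries (ZMod b)) * u := by
    rw [← Polynomial.coe_mul, hreflKR, Polynomial.coe_add, Polynomial.coe_mul,
      Polynomial.coe_mul, Polynomial.coe_pow, Polynomial.coe_X, ← hu]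
  have hser : (↑(Polynomial.reflect n K) : PowerSeries (ZMod b))
        * ((↑(Polynomial.reflect n R) : PowerSeries (ZMod b)) * u⁻¹)
      = PowerSeries.X ^ n * ((↑(Polynomial.reflect n B) : PowerSeries (ZMod b)) * u⁻¹)
        + (↑(Polynomial.reflect (n - 1) A₀) : PowerSeries (ZMod b)) := by
    rw [← mul_assoc, hcoe, add_mul, mul_assoc _ u u⁻¹, huinv, mul_one]
    ring
  -- take coefficient n
  have hLHS : PowerSeries.coeff (R := ZMod b) n
      ((↑(Polynomial.reflect n K) : PowerSeries (ZMod b))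
        * ((↑(Polynomial.reflect n R) : PowerSeries (ZMod b)) * u⁻¹))
      = ∑ i ∈ Finset.range (n + 1), K.coeff i *
          PowerSeries.coeff (R := ZMod b) i
            ((↑(Polynomial.reflect n R) : PowerSeries (ZMod b)) * u⁻¹) := by
    rw [PowerSeries.coeff_mul, Finset.Nat.sum_antidiagonal_eq_sum_range_succ_mk]
    have hterm : ∀ i ∈ Finset.range (n + 1),
        PowerSeries.coeff (R := ZMod b) i (↑(Polynomial.reflect n K) : PowerSeries (ZMod b)) *
          PowerSeries.coeff (R := ZMod b) (n - i)
            ((↑(Polynomial.reflect n R) : PowerSeries (ZMod b)) * u⁻¹)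
        = (fun j => K.coeff j * PowerSeries.coeff (R := ZMod b) j
            ((↑(Polynomial.reflect n R) : PowerSeries (ZMod b)) * u⁻¹)) (n - i) := by
      intro i hi
      rw [Finset.mem_range] at hi
      rw [Polynomial.coeff_coe, Polynomial.coeff_reflect, Polynomial.revAt_le (by omega)]
    rw [Finset.sum_congr rfl hterm]
    have := Finset.sum_range_reflect (fun j => K.coeff j * PowerSeries.coeff (R := ZMod b) j
        ((↑(Polynomial.reflect n R) : PowerSeries (ZMod b)) * u⁻¹)) (n + 1)
    simp only [Nat.add_sub_cancel] at this ⊢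
    exact this
  have hRHS1 : PowerSeries.coeff (R := ZMod b) n
      (PowerSeries.X ^ n * ((↑(Polynomial.reflect n B) : PowerSeries (ZMod b)) * u⁻¹))
      = B.coeff n * lc⁻¹ := by
    have hxp := PowerSeries.coeff_X_pow_mul
      ((↑(Polynomial.reflect n B) : PowerSeries (ZMod b)) * u⁻¹) n 0
    rw [zero_add] at hxp
    rw [hxp, PowerSeries.coeff_zero_eq_constantCoeff_apply, map_mul,
      PowerSeries.constantCoeff_inv, hcc,
      ← PowerSeries.coeff_zero_eq_constantCoeff_apply, Polynomial.coeff_coe,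
      Polynomial.coeff_reflect, Polynomial.revAt_zero]
  have hRHS2 : PowerSeries.coeff (R := ZMod b) n
      (↑(Polynomial.reflect (n - 1) A₀) : PowerSeries (ZMod b)) = 0 := by
    rw [Polynomial.coeff_coe, Polynomial.coeff_reflect]
    rcases hAcase with h0 | ⟨hn1, hAdeg⟩
    · simp [h0]
    · rw [Polynomial.revAt_eq_self_of_lt (by omega)]
      exact Polynomial.coeff_eq_zero_of_natDegree_lt (by omega)
  have := congrArg (PowerSeries.coeff (R := ZMod b) n) hser
  rw [map_add, hLHS, hRHS1, hRHS2, add_zero] at this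
  rw [this]
  exact mul_comm _ _

end key

/-- Character property of rank-1 polynomial lattice rules. -/
theorem polynomial_lattice_character_property
    (b : ℕ) [hb : Fact (Nat.Prime b)] (m : ℕ) (hm : 1 ≤ m)
    (p q : Polynomial (ZMod b)) (hp : p.degree = (m : ℕ)) (hq : q.degree < (m : ℕ))
    (k : ℕ) (hk : k < b ^ m) :
    (1 / ((b : ℂ) ^ m)) * ∑ h ∈ Finset.range (b ^ m),
        Complex.exp ((2 * Real.pi * Complex.I / b) *
          ∑ i ∈ Finset.range m,
            (bdigit b k i : ℂ) * ((laurentCoeff b m p q h (i + 1)).val : ℂ)) =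
      if p ∣ natToPoly b k * q then 1 else 0 := by
  classical
  have hprime := hb.out
  have hb2 : 2 ≤ b := hprime.two_le
  haveI : NeZero b := ⟨hprime.ne_zero⟩
  have hbne : (b : ℂ) ≠ 0 := Nat.cast_ne_zero.mpr hprime.ne_zero
  obtain ⟨n, rfl⟩ : ∃ n, m = n + 1 := ⟨m - 1, by omega⟩
  set K := natToPoly b k with hKdef
  have hp0 : p ≠ 0 := by
    intro h0
    rw [h0, Polynomial.degree_zero] at hp
    exact WithBot.bot_ne_coe (by exact_mod_cast hp)
  have hlc0 : p.leadingCoeff ≠ 0 := Polynomial.leadingCoeff_ne_zero.mpr hp0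
  set lc := p.leadingCoeff with hlc
  set pm := p * Polynomial.C lc⁻¹ with hpm
  have hmonic : pm.Monic := Polynomial.monic_mul_leadingCoeff_inv hp0
  have hpmdeg : pm.degree = ((n + 1 : ℕ) : WithBot ℕ) := by
    rw [hpm, Polynomial.degree_mul_leadingCoeff_inv _ hp0]
    exact_mod_cast hp
  have hpdvdpm : p ∣ pm := ⟨Polynomial.C lc⁻¹, rfl⟩
  have hpmdvdp : pm ∣ p := ⟨Polynomial.C lc, by
    rw [hpm, mul_assoc, ← Polynomial.C_mul, inv_mul_cancel₀ hlc0, Polynomial.C_1, mul_one]⟩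
  have hKnat : K.natDegree ≤ n := by
    apply Polynomial.natDegree_le_iff_coeff_eq_zero.mpr
    intro N hN
    rw [hKdef, coeff_natToPoly, bdigit_eq_zero_of_le hb2 hk (by omega), Nat.cast_zero]
  -- the additive character
  have hζb : Complex.exp (2 * Real.pi * Complex.I / b) ^ b = 1 := by
    rw [← Complex.exp_nat_mul,
      show (b : ℂ) * (2 * Real.pi * Complex.I / b) = 2 * Real.pi * Complex.I by
        field_simp]
    exact Complex.exp_two_pi_mul_I
  set T : (Fin (n + 1) → ZMod b) → ZMod b :=
    fun v => lc⁻¹ * ((K * (polyOf (n + 1) v * q)) %ₘ pm).coeff n with hT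
  -- transform each term of the sum
  have hterm : ∀ h ∈ Finset.range (b ^ (n + 1)),
      Complex.exp ((2 * Real.pi * Complex.I / b) *
        ∑ i ∈ Finset.range (n + 1),
          (bdigit b k i : ℂ) * ((laurentCoeff b (n + 1) p q h (i + 1)).val : ℂ))
      = (AddChar.zmodChar b hζb)
          (T (fun i : Fin (n + 1) => (bdigit b h (i : ℕ) : ZMod b))) := by
    intro h hmem
    rw [Finset.mem_range] at hmem
    set N : ℕ := ∑ i ∈ Finset.range (n + 1),
      bdigit b k i * (laurentCoeff b (n + 1) p q h (i + 1)).val with hN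
    have h1 : ∑ i ∈ Finset.range (n + 1),
        (bdigit b k i : ℂ) * ((laurentCoeff b (n + 1) p q h (i + 1)).val : ℂ) = (N : ℂ) := by
      rw [hN]
      push_cast
      rfl
    rw [h1, mul_comm (2 * Real.pi * Complex.I / (b : ℂ)) (N : ℂ), Complex.exp_nat_mul,
      ← AddChar.zmodChar_apply' hζb]
    congr 1
    -- (N : ZMod b) = T (digit vector)
    have h3 : ∀ i : ℕ, laurentCoeff b (n + 1) p q h (i + 1)
        = PowerSeries.coeff (R := ZMod b) i
            ((↑(Polynomial.reflect n ((natToPoly b h * q) %ₘ pm)) : PowerSeries (ZMod b)) *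
             ((↑(Polynomial.reflect (n + 1) p) : PowerSeries (ZMod b)))⁻¹) := by
      intro i
      unfold laurentCoeff
      rw [Nat.add_sub_cancel, mul_assoc, PowerSeries.coeff_succ_X_mul, Polynomial.mod_def,
        ← hlc, ← hpm]
    have h2 : (N : ZMod b) = ∑ i ∈ Finset.range (n + 1),
        K.coeff i * laurentCoeff b (n + 1) p q h (i + 1) := by
      rw [hN, Nat.cast_sum]
      apply Finset.sum_congr rfl
      intro i _
      rw [Nat.cast_mul, ZMod.natCast_rightInverse _, hKdef, coeff_natToPoly]
    have hRnat : ((natToPoly b h * q) %ₘ pm).natDegree ≤ n :=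
      natDeg_le_of_deg_lt (hpmdeg ▸ Polynomial.degree_modByMonic_lt _ hmonic)
    have h4 := key_identity n p K ((natToPoly b h * q) %ₘ pm)
      (by exact_mod_cast hp) hKnat hRnat
    rw [← hlc, ← hpm, modByMonic_mul_mod _ _ _ hmonic,
      natToPoly_eq_polyOf hb2 hmem] at h4
    rw [h2, Finset.sum_congr rfl (fun i _ => by rw [h3 i]),
      natToPoly_eq_polyOf hb2 hmem]
    simp only [hT]
    exact h4
  rw [Finset.sum_congr rfl hterm,
    sum_digits_reindex hb2 (n + 1) (fun v => (AddChar.zmodChar b hζb) (T v))]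
  by_cases hdvd : p ∣ K * q
  · rw [if_pos hdvd]
    have hT0 : ∀ v, T v = 0 := by
      intro v
      have hdd : pm ∣ K * (polyOf (n + 1) v * q) := by
        have h5 : K * (polyOf (n + 1) v * q) = K * q * polyOf (n + 1) v := by ring
        rw [h5]
        exact (hpmdvdp.trans hdvd).mul_right _
      simp only [hT]
      rw [(Polynomial.modByMonic_eq_zero_iff_dvd hmonic).mpr hdd, Polynomial.coeff_zero,
        mul_zero]
    rw [Finset.sum_congr rfl (fun v _ => by rw [hT0 v, AddChar.map_zero_eq_one]),
      Finset.sum_const, Finset.card_univ]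
    have hcard : Fintype.card (Fin (n + 1) → ZMod b) = b ^ (n + 1) := by
      simp [ZMod.card]
    rw [hcard, nsmul_eq_mul, mul_one]
    rw [one_div]
    push_cast
    rw [inv_mul_cancel₀ (pow_ne_zero _ hbne)]
  · rw [if_neg hdvd]
    set W := (K * q) %ₘ pm with hW
    have hW0 : W ≠ 0 := by
      intro h0
      exact hdvd (hpdvdpm.trans ((Polynomial.modByMonic_eq_zero_iff_dvd hmonic).mp h0))
    have hWdeg : W.natDegree ≤ n :=
      natDeg_le_of_deg_lt (hpmdeg ▸ Polynomial.degree_modByMonic_lt _ hmonic)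
    set d := W.natDegree with hd
    set v₀ : Fin (n + 1) → ZMod b := fun i => if (i : ℕ) = n - d then 1 else 0 with hv₀
    have hpoly0 : polyOf (n + 1) v₀ = Polynomial.X ^ (n - d) := by
      unfold polyOf
      rw [Finset.sum_eq_single (⟨n - d, by omega⟩ : Fin (n + 1))]
      · simp [hv₀]
      · intro i _ hne
        have hi : (i : ℕ) ≠ n - d := fun hc => hne (by
          apply Fin.ext
          simpa using hc)
        simp [hv₀, hi]
      · intro hmem; exact absurd (Finset.mem_univ _) hmem
    have hTv₀ : T v₀ ≠ 0 := by
      have h6 : K * q * Polynomial.X ^ (n - d)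
          = W * Polynomial.X ^ (n - d) + pm * (K * q /ₘ pm * Polynomial.X ^ (n - d)) := by
        conv_lhs => rw [← Polynomial.modByMonic_add_div (K * q) pm]
        ring
      have h7 : (K * (polyOf (n + 1) v₀ * q)) %ₘ pm = W * Polynomial.X ^ (n - d) := by
        rw [hpoly0, show K * (Polynomial.X ^ (n - d) * q) = K * q * Polynomial.X ^ (n - d) by
          ring, h6, Polynomial.add_modByMonic,
          (Polynomial.modByMonic_eq_zero_iff_dvd hmonic).mpr ⟨_, rfl⟩, add_zero,
          Polynomial.modByMonic_eq_self_iff hmonic]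
        rw [hpmdeg, Polynomial.degree_mul, Polynomial.degree_X_pow,
          Polynomial.degree_eq_natDegree hW0, ← hd]
        exact_mod_cast (by omega : d + (n - d) < n + 1)
      have h8 : (W * Polynomial.X ^ (n - d)).coeff n = W.coeff d := by
        have h9 := Polynomial.coeff_mul_X_pow W (n - d) d
        rw [show d + (n - d) = n by omega] at h9
        exact h9
      simp only [hT]
      rw [h7, h8]
      exact mul_ne_zero (inv_ne_zero hlc0) (Polynomial.leadingCoeff_ne_zero.mpr hW0)
    have hchi : (AddChar.zmodChar b hζb) (T v₀) ≠ 1 := by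
      intro h1
      rw [AddChar.zmodChar_apply,
        (Complex.isPrimitiveRoot_exp b hprime.ne_zero).pow_eq_one_iff_dvd] at h1
      have hvl := ZMod.val_lt (T v₀)
      exact hTv₀ ((ZMod.val_eq_zero _).mp (Nat.eq_zero_of_dvd_of_lt h1 hvl))
    have hTadd : ∀ u v, T (u + v) = T u + T v := by
      intro u v
      simp only [hT]
      rw [polyOf_add,
        show K * ((polyOf (n + 1) u + polyOf (n + 1) v) * q)
          = K * (polyOf (n + 1) u * q) + K * (polyOf (n + 1) v * q) by ring,
        Polynomial.add_modByMonic, Polynomial.coeff_add, mul_add]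
    have hsum : ∑ v : Fin (n + 1) → ZMod b, (AddChar.zmodChar b hζb) (T v) = 0 := by
      have htr : ∑ v : Fin (n + 1) → ZMod b, (AddChar.zmodChar b hζb) (T v)
          = ∑ v : Fin (n + 1) → ZMod b, (AddChar.zmodChar b hζb) (T (v + v₀)) :=
        (Fintype.sum_equiv (Equiv.addRight v₀)
          (fun v => (AddChar.zmodChar b hζb) (T (v + v₀)))
          (fun v => (AddChar.zmodChar b hζb) (T v)) (fun v => rfl)).symm
      have h10 : ∑ v : Fin (n + 1) → ZMod b, (AddChar.zmodChar b hζb) (T (v + v₀))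
          = (AddChar.zmodChar b hζb) (T v₀)
            * ∑ v : Fin (n + 1) → ZMod b, (AddChar.zmodChar b hζb) (T v) := by
        rw [Finset.mul_sum]
        apply Finset.sum_congr rfl
        intro v _
        rw [hTadd v v₀, AddChar.map_add_eq_mul, mul_comm]
      have h11 := htr.trans h10
      have h12 : (1 - (AddChar.zmodChar b hζb) (T v₀))
          * (∑ v : Fin (n + 1) → ZMod b, (AddChar.zmodChar b hζb) (T v)) = 0 := by
        rw [sub_mul, one_mul, ← h11, sub_self]
      rcases mul_eq_zero.mp h12 with h13 | h13
      · exact absurd (sub_eq_zero.mp h13).symm hchi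
      · exact h13
    rw [hsum, mul_zero]
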